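/- For every A > 0: (i) E_A(λ) − (1/√2)·[[−1, i],[i, −1]] = O(1/|λ|) as λ → ∞ within the open upper half-plane {Im λ > 0}; and (ii) E_A(λ) − (1/√2)·[[1, i],[i, 1]] = O(1/|λ|) as λ → ∞ within the open lower half-plane {Im λ < 0}. -/

import Mathlib

open Complex Matrix MeasureTheory Filter

noncomputable def csqrt (z : ℂ) : ℂ := z ^ (1/2 : ℂ)

noncomputable def sB (w : ℂ) : ℂ := Complex.I * csqrt (-w)

def SigmaSet (A : ℝ) : Set ℂ := Complex.ofReal '' (Set.Iic (-(1/A)) ∪ Set.Ici (1/A))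

noncomputable def kA (A : ℝ) (l : ℂ) : ℂ := Complex.I * csqrt (1/(A:ℂ)^2 - l^2)

noncomputable def DA (A : ℝ) (l : ℂ) : Matrix (Fin 2) (Fin 2) ℂ :=
  (((Real.sqrt 2 : ℝ) : ℂ)⁻¹ * sB (1/(Complex.I * (A:ℂ) * kA A l) - 1)) •
    !![l * (A:ℂ) / (1 - Complex.I * (A:ℂ) * kA A l), -1;
       -1, l * (A:ℂ) / (1 - Complex.I * (A:ℂ) * kA A l)]

noncomputable def EA (A : ℝ) (l : ℂ) : Matrix (Fin 2) (Fin 2) ℂ :=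
  (((Real.sqrt 2 : ℝ) : ℂ)⁻¹ * sB (1/(Complex.I * (A:ℂ) * kA A l) - 1)) •
    !![l * (A:ℂ) / (1 - Complex.I * (A:ℂ) * kA A l), 1;
       1, l * (A:ℂ) / (1 - Complex.I * (A:ℂ) * kA A l)]

def sigma1 : Matrix (Fin 2) (Fin 2) ℂ := !![0, 1; 1, 0]
def sigma2 : Matrix (Fin 2) (Fin 2) ℂ := !![0, -Complex.I; Complex.I, 0]
def sigma3 : Matrix (Fin 2) (Fin 2) ℂ := !![1, 0; 0, -1]

attribute [local instance] Matrix.normedAddCommGroup Matrix.normedSpace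


lemma csqrt_sq (z : ℂ) : csqrt z ^ 2 = z := by
  unfold csqrt
  rcases eq_or_ne z 0 with h | h
  · simp [h, Complex.zero_cpow (by norm_num : (1/2:ℂ) ≠ 0)]
  · rw [pow_two, ← Complex.cpow_add _ _ h]; norm_num

lemma csqrt_re_nonneg (z : ℂ) : 0 ≤ (csqrt z).re := by
  rcases eq_or_ne z 0 with h | h
  · simp [h, csqrt, Complex.zero_cpow (by norm_num : (1/2:ℂ) ≠ 0)]
  · rw [csqrt, Complex.cpow_def_of_ne_zero h, Complex.exp_re]
    have hcos : 0 ≤ Real.cos ((Complex.log z * (1/2)).im) := by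
      apply Real.cos_nonneg_of_mem_Icc
      have h1 := Complex.neg_pi_lt_arg z
      have h2 := Complex.arg_le_pi z
      constructor <;> simp [Complex.mul_im, Complex.log_im] <;> linarith
    positivity

lemma csqrt_im_nonneg {z : ℂ} (h : 0 ≤ z.im) : 0 ≤ (csqrt z).im := by
  rcases eq_or_ne z 0 with h0 | h0
  · simp [h0, csqrt, Complex.zero_cpow (by norm_num : (1/2:ℂ) ≠ 0)]
  · rw [csqrt, Complex.cpow_def_of_ne_zero h0, Complex.exp_im]
    have harg : 0 ≤ Complex.arg z := Complex.arg_nonneg_iff.2 h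
    have h2 := Complex.arg_le_pi z
    have hsin : 0 ≤ Real.sin ((Complex.log z * (1/2)).im) := by
      apply Real.sin_nonneg_of_nonneg_of_le_pi <;>
        simp [Complex.mul_im, Complex.log_im] <;> linarith [Real.pi_pos]
    positivity

lemma csqrt_im_nonpos {z : ℂ} (h : z.im < 0) : (csqrt z).im ≤ 0 := by
  have h0 : z ≠ 0 := by intro h'; rw [h'] at h; simp at h
  rw [csqrt, Complex.cpow_def_of_ne_zero h0, Complex.exp_im]
  have harg : Complex.arg z < 0 := Complex.arg_neg_iff.2 h
  have h1 := Complex.neg_pi_lt_arg z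
  have hsin : Real.sin ((Complex.log z * (1/2)).im) ≤ 0 := by
    apply Real.sin_nonpos_of_nonpos_of_neg_pi_le <;>
      simp [Complex.mul_im, Complex.log_im] <;> linarith [Real.pi_pos]
  exact mul_nonpos_of_nonneg_of_nonpos (Real.exp_pos _).le hsin

lemma hp_est (A : ℝ) (hA : 0 < A) (e : ℝ) (he : e^2 = 1) (l : ℂ) (hy : 0 < e * l.im) :
    ‖-(A:ℂ) * csqrt (1/(A:ℂ)^2 - l^2) - (e:ℂ)*Complex.I*(A:ℂ)*l‖
      ≤ (A * ‖l‖)⁻¹ := by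
  have hl0 : l ≠ 0 := by intro h; rw [h] at hy; simp at hy
  have habsl : 0 < ‖l‖ := norm_pos_iff.mpr hl0
  set w : ℂ := 1/(A:ℂ)^2 - l^2 with hw
  set m : ℂ := -(A:ℂ) * csqrt w with hm
  have hA0 : (A:ℂ) ≠ 0 := by exact_mod_cast hA.ne'
  have hmsq : m^2 = 1 - (A:ℂ)^2 * l^2 := by
    have h1 : csqrt w ^ 2 = w := csqrt_sq w
    have h2 : (A:ℂ)^2 * w = 1 - (A:ℂ)^2 * l^2 := by rw [hw]; field_simp
    calc m^2 = (A:ℂ)^2 * csqrt w ^2 := by rw [hm]; ring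
      _ = (A:ℂ)^2 * w := by rw [h1]
      _ = _ := h2
  have hI : ((e:ℂ)*Complex.I)^2 = -1 := by
    have he' : (e:ℂ)^2 = 1 := by exact_mod_cast he
    rw [mul_pow, Complex.I_sq, he']; ring
  have hprod : (m - (e:ℂ)*Complex.I*(A:ℂ)*l) * (m + (e:ℂ)*Complex.I*(A:ℂ)*l) = 1 := by
    linear_combination hmsq - (A:ℂ)^2*l^2*hI
  have hwim : w.im = -(2*l.re*l.im) := by
    have h3 : w = ((1/A^2 : ℝ) : ℂ) - l^2 := by rw [hw]; push_cast; ring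
    rw [h3, Complex.sub_im, Complex.ofReal_im, sq, Complex.mul_im]
    ring
  have hmre : m.re ≤ 0 := by
    have := csqrt_re_nonneg w
    simp [hm, Complex.mul_re]
    nlinarith
  have hmim_sign : 0 ≤ m.im * (e * l.re) := by
    rcases lt_trichotomy (e*l.re) 0 with h | h | h
    · have h1 : 0 < w.im := by rw [hwim]; nlinarith
      have h2 : 0 ≤ (csqrt w).im := csqrt_im_nonneg h1.le
      have h3 : m.im ≤ 0 := by simp [hm, Complex.mul_im]; nlinarith
      nlinarith
    · rw [h]; simp
    · have h1 : w.im < 0 := by rw [hwim]; nlinarith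
      have h2 : (csqrt w).im ≤ 0 := csqrt_im_nonpos h1
      have h3 : 0 ≤ m.im := by simp [hm, Complex.mul_im]; nlinarith
      nlinarith
  set B : ℂ := m + (e:ℂ)*Complex.I*(A:ℂ)*l with hB
  have hBre : B.re = m.re - e*A*l.im := by
    simp [hB, Complex.add_re, Complex.mul_re, Complex.mul_im]
    try ring
  have hBim : B.im = m.im + e*A*l.re := by
    simp [hB, Complex.add_im, Complex.mul_re, Complex.mul_im]
    try ring
  have hBnorm : A * ‖l‖ ≤ ‖B‖ := by
    have habs2 : (‖l‖)^2 = l.re^2 + l.im^2 := by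
      rw [Complex.sq_norm, Complex.normSq_apply]; ring
    have h1 : (A * ‖l‖)^2 ≤ (‖B‖)^2 := by
      rw [Complex.sq_norm, Complex.normSq_apply, hBre, hBim]
      have h2 : A^2*l.im^2 ≤ (m.re - e*A*l.im)^2 := by
        have expand : (m.re - e*A*l.im)^2
            = m.re^2 + 2*A*((-m.re)*(e*l.im)) + A^2*l.im^2 := by
          linear_combination (A^2*l.im^2) * he
        rw [expand]
        nlinarith [mul_nonneg (neg_nonneg.mpr hmre) hy.le, sq_nonneg m.re, hA.le,
          mul_nonneg hA.le (mul_nonneg (neg_nonneg.mpr hmre) hy.le)]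
      have h3 : A^2*l.re^2 ≤ (m.im + e*A*l.re)^2 := by
        have expand : (m.im + e*A*l.re)^2
            = m.im^2 + 2*A*(m.im*(e*l.re)) + A^2*l.re^2 := by
          linear_combination (A^2*l.re^2) * he
        rw [expand]
        nlinarith [mul_nonneg hA.le hmim_sign, sq_nonneg m.im]
      nlinarith
    nlinarith [norm_nonneg B, mul_pos hA habsl, sq_nonneg (‖B‖ - A*‖l‖)]
  have hBpos : 0 < ‖B‖ := lt_of_lt_of_le (mul_pos hA habsl) hBnorm
  have habsprod : ‖m - (e:ℂ)*Complex.I*(A:ℂ)*l‖ * ‖B‖ = 1 := by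
    rw [← norm_mul, hprod]; simp
  rw [show ‖m - (e:ℂ)*Complex.I*(A:ℂ)*l‖ = (‖B‖)⁻¹ by
    field_simp; linarith [habsprod]]
  exact inv_anti₀ (mul_pos hA habsl) hBnorm

lemma csqrt_one_add (u : ℂ) : ‖csqrt (1+u) - 1‖ ≤ ‖u‖ := by
  have key : (csqrt (1+u) - 1) * (csqrt (1+u) + 1) = u := by
    linear_combination csqrt_sq (1+u)
  have h2 : 1 ≤ ‖csqrt (1+u) + 1‖ := by
    have hre := csqrt_re_nonneg (1+u)
    have h3 : (1:ℝ) ≤ ((csqrt (1+u)) + 1).re := by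
      rw [Complex.add_re, Complex.one_re]; linarith
    exact h3.trans (Complex.re_le_norm _)
  calc ‖csqrt (1+u) - 1‖
      ≤ ‖csqrt (1+u) - 1‖ * ‖csqrt (1+u) + 1‖ := by
        nlinarith [norm_nonneg (csqrt (1+u) - 1)]
    _ = ‖u‖ := by rw [← norm_mul, key]

lemma tri_abs (a b : ℂ) : ‖a‖ - ‖b‖ ≤ ‖a - b‖ := by
  simpa using norm_sub_norm_le a b

set_option maxHeartbeats 1000000 in
lemma core_est (A : ℝ) (hA : 0 < A) (σ : ℝ) (hσ : σ^2 = 1) (l : ℂ)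
    (ht : 4 ≤ A * ‖l‖)
    (hε : ‖-(A:ℂ) * csqrt (1/(A:ℂ)^2 - l^2) - (σ:ℂ)*Complex.I*(A:ℂ)*l‖
        ≤ (A * ‖l‖)⁻¹) :
    ‖EA A l - (((Real.sqrt 2:ℝ):ℂ)⁻¹) • !![-(σ:ℂ), Complex.I; Complex.I, -(σ:ℂ)]‖
      ≤ (10/A) * (1 / ‖l‖) := by
  have habsl : 0 < ‖l‖ := by nlinarith [norm_nonneg l]
  set t : ℝ := A * ‖l‖ with htdef
  have htpos : (0:ℝ) < t := by nlinarith
  have htinv : t⁻¹ ≤ 1/4 := by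
    rw [show (1:ℝ)/4 = 4⁻¹ by norm_num]; exact inv_anti₀ (by norm_num) ht
  set m : ℂ := -(A:ℂ) * csqrt (1/(A:ℂ)^2 - l^2) with hm
  have hm_eq : Complex.I * (A:ℂ) * kA A l = m := by
    rw [kA, hm]
    linear_combination (A:ℂ) * csqrt (1/(A:ℂ)^2 - l^2) * Complex.I_sq
  have hσabs : |σ| = 1 := by
    have h1 : (|σ| - 1) * (|σ| + 1) = 0 := by nlinarith [_root_.sq_abs σ]
    rcases mul_eq_zero.1 h1 with h | h
    · linarith
    · nlinarith [abs_nonneg σ]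
  have hσℂ : ((σ:ℂ))^2 = 1 := by exact_mod_cast hσ
  have hsI : ((σ:ℂ)*Complex.I)^2 = -1 := by
    rw [mul_pow, Complex.I_sq, hσℂ]; ring
  have habs_big : ‖(σ:ℂ)*Complex.I*(A:ℂ)*l‖ = t := by
    simp [norm_mul, Complex.norm_real, Real.norm_eq_abs, Complex.norm_I, abs_of_pos hA, hσabs, htdef]
  -- |m| ≥ t/2
  have habs_m : t/2 ≤ ‖m‖ := by
    have h1 := tri_abs ((σ:ℂ)*Complex.I*(A:ℂ)*l) m
    have h2 : ‖(σ:ℂ)*Complex.I*(A:ℂ)*l - m‖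
        = ‖m - (σ:ℂ)*Complex.I*(A:ℂ)*l‖ := by
      rw [show (σ:ℂ)*Complex.I*(A:ℂ)*l - m = -(m - (σ:ℂ)*Complex.I*(A:ℂ)*l) by ring,
        norm_neg _]
    rw [h2, habs_big] at h1
    nlinarith
  have hm0 : m ≠ 0 := by
    intro h; rw [h] at habs_m; simp at habs_m; nlinarith
  have hinvm : ‖1/m‖ ≤ 2/t := by
    rw [one_div, norm_inv]
    calc (‖m‖)⁻¹ ≤ (t/2)⁻¹ := inv_anti₀ (by positivity) habs_m
      _ = 2/t := by field_simp
  -- s estimates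
  set s : ℂ := sB (1/m - 1) with hs
  have hs_eq : s = Complex.I * csqrt (1 + -(1/m)) := by
    rw [hs, sB, show -(1/m - 1) = 1 + -(1/m) by ring]
  have hs_diff : ‖s - Complex.I‖ ≤ 2/t := by
    have h1 : s - Complex.I = Complex.I * (csqrt (1 + -(1/m)) - 1) := by
      rw [hs_eq]; ring
    rw [h1, norm_mul, Complex.norm_I, one_mul]
    calc ‖csqrt (1 + -(1/m)) - 1‖ ≤ ‖-(1/m)‖ := csqrt_one_add _
      _ = ‖1/m‖ := by rw [norm_neg _]
      _ ≤ 2/t := hinvm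
  have hs_abs : ‖s‖ ≤ 2 := by
    have h1 := tri_abs s Complex.I
    rw [Complex.norm_I] at h1
    have h2 : 2/t ≤ 1/2 := by rw [div_le_div_iff₀ htpos (by norm_num)]; nlinarith
    linarith
  -- 1 - m estimates
  have h1m : t/2 ≤ ‖1 - m‖ := by
    have h1 := tri_abs ((σ:ℂ)*Complex.I*(A:ℂ)*l) ((σ:ℂ)*Complex.I*(A:ℂ)*l + (1 - m))
    rw [show (σ:ℂ)*Complex.I*(A:ℂ)*l - ((σ:ℂ)*Complex.I*(A:ℂ)*l + (1 - m)) = -(1-m) by ring,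
      norm_neg _, habs_big] at h1
    have h2 : ‖(σ:ℂ)*Complex.I*(A:ℂ)*l + (1 - m)‖
        ≤ 1 + t⁻¹ := by
      have h3 : (σ:ℂ)*Complex.I*(A:ℂ)*l + (1 - m)
          = 1 - (m - (σ:ℂ)*Complex.I*(A:ℂ)*l) := by ring
      rw [h3]
      calc ‖1 - (m - (σ:ℂ)*Complex.I*(A:ℂ)*l)‖
          ≤ ‖(1:ℂ)‖ + ‖m - (σ:ℂ)*Complex.I*(A:ℂ)*l‖ := by
            rw [sub_eq_add_neg]
            exact (norm_add_le _ _).trans (by rw [norm_neg _])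
        _ ≤ 1 + t⁻¹ := by rw [norm_one]; linarith [hε]
    nlinarith
  have h1m0 : (1:ℂ) - m ≠ 0 := by
    intro h; rw [h] at h1m; simp at h1m; nlinarith
  -- d estimates
  set d : ℂ := l*(A:ℂ)/(1-m) with hd
  have hd_diff : ‖d - (σ:ℂ)*Complex.I‖ ≤ 4/t := by
    have hnum : (d - (σ:ℂ)*Complex.I) * (1-m)
        = (σ:ℂ)*Complex.I*((m - (σ:ℂ)*Complex.I*(A:ℂ)*l) - 1) := by
      rw [hd]
      field_simp
      linear_combination (A:ℂ)*l*hsI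
    have h1 := congrArg (‖·‖) hnum
    rw [norm_mul, norm_mul] at h1
    have h2 : ‖(m - (σ:ℂ)*Complex.I*(A:ℂ)*l) - 1‖
        ≤ t⁻¹ + 1 := by
      calc ‖(m - (σ:ℂ)*Complex.I*(A:ℂ)*l) - 1‖
          ≤ ‖m - (σ:ℂ)*Complex.I*(A:ℂ)*l‖ + ‖(1:ℂ)‖ := by
            rw [sub_eq_add_neg]
            exact (norm_add_le _ _).trans (by rw [norm_neg _])
        _ ≤ t⁻¹ + 1 := by rw [norm_one]; linarith [hε]
    have h3 : ‖(σ:ℂ)*Complex.I‖ = 1 := by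
      rw [norm_mul, Complex.norm_real, Real.norm_eq_abs, Complex.norm_I, hσabs]; norm_num
    rw [h3, one_mul] at h1
    have h4 : ‖d - (σ:ℂ)*Complex.I‖ * ‖1-m‖ ≤ t⁻¹ + 1 := by
      rw [h1]; exact h2
    have h5 : t⁻¹ + 1 ≤ 2 := by linarith
    have h6 : 0 ≤ ‖d - (σ:ℂ)*Complex.I‖ := norm_nonneg _
    rw [le_div_iff₀ htpos]
    nlinarith [mul_le_mul_of_nonneg_left h1m h6]
  have hdiag : ‖s*d + (σ:ℂ)‖ ≤ 10/t := by
    have hid : s*d + (σ:ℂ) = s*(d - (σ:ℂ)*Complex.I) + (σ:ℂ)*Complex.I*(s - Complex.I) := by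
      linear_combination (σ:ℂ)*Complex.I_sq
    rw [hid]
    calc ‖s*(d - (σ:ℂ)*Complex.I) + (σ:ℂ)*Complex.I*(s - Complex.I)‖
        ≤ ‖s*(d - (σ:ℂ)*Complex.I)‖
          + ‖(σ:ℂ)*Complex.I*(s - Complex.I)‖ :=
          norm_add_le _ _
      _ = ‖s‖ * ‖d - (σ:ℂ)*Complex.I‖
          + ‖(σ:ℂ)*Complex.I‖ * ‖s - Complex.I‖ := by
          rw [norm_mul, norm_mul]
      _ ≤ 2 * (4/t) + 1 * (2/t) := by
          have h3 : ‖(σ:ℂ)*Complex.I‖ = 1 := by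
            rw [norm_mul, Complex.norm_real, Real.norm_eq_abs, Complex.norm_I, hσabs]; norm_num
          rw [h3]
          have := norm_nonneg (d - (σ:ℂ)*Complex.I)
          have := norm_nonneg (s - Complex.I)
          nlinarith
      _ = 10/t := by field_simp; ring
  -- matrix assembly
  set c : ℂ := ((Real.sqrt 2:ℝ):ℂ)⁻¹ with hc
  have hc_abs : ‖c‖ ≤ 1 := by
    rw [hc, norm_inv, Complex.norm_real, Real.norm_eq_abs]
    have h1 : 1 ≤ Real.sqrt 2 := by
      nlinarith [Real.sq_sqrt (by norm_num : (0:ℝ) ≤ 2), Real.sqrt_nonneg 2]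
    have h2 : |Real.sqrt 2| = Real.sqrt 2 := abs_of_nonneg (Real.sqrt_nonneg 2)
    rw [h2]
    exact inv_le_one_of_one_le₀ h1
  have hEA : EA A l - c • !![-(σ:ℂ), Complex.I; Complex.I, -(σ:ℂ)]
      = !![c*(s*d+(σ:ℂ)), c*(s-Complex.I); c*(s-Complex.I), c*(s*d+(σ:ℂ))] := by
    rw [EA, hm_eq]
    ext i j
    fin_cases i <;> fin_cases j <;>
      simp [Matrix.smul_apply, hs, hd, hc] <;> ring
  rw [hEA]
  have hgoal : (10/A) * (1/‖l‖) = 10/t := by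
    rw [htdef]; field_simp
  rw [hgoal]
  rw [Matrix.norm_le_iff (by positivity : (0:ℝ) ≤ 10/t)]
  intro i j
  have hofft : ‖c*(s-Complex.I)‖ ≤ 10/t := by
    rw [norm_mul]
    calc ‖c‖ * ‖s-Complex.I‖ ≤ 1 * (2/t) :=
          mul_le_mul hc_abs hs_diff (norm_nonneg _) (by norm_num)
      _ ≤ 10/t := by rw [one_mul]; gcongr <;> norm_num
  have hdiagt : ‖c*(s*d+(σ:ℂ))‖ ≤ 10/t := by
    rw [norm_mul]
    calc ‖c‖ * ‖s*d+(σ:ℂ)‖ ≤ 1 * (10/t) :=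
          mul_le_mul hc_abs hdiag (norm_nonneg _) (by norm_num)
      _ = 10/t := one_mul _
  fin_cases i <;> fin_cases j <;>
    simp only [Matrix.cons_val', Matrix.cons_val_zero, Matrix.empty_val',
      Matrix.cons_val_fin_one, Matrix.cons_val_one, Matrix.head_cons, Matrix.head_fin_const] <;>
    first
      | exact hdiagt
      | exact hofft

/-- asymptotics of E_A as λ → ∞ in the open upper and lower half-planes. -/
theorem stmt_10 (A : ℝ) (hA : 0 < A) :
    ((fun l : ℂ => EA A l - (((Real.sqrt 2 : ℝ) : ℂ)⁻¹) •
        !![(-1 : ℂ), Complex.I; Complex.I, -1])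
      =O[Bornology.cobounded ℂ ⊓ Filter.principal {z : ℂ | 0 < z.im}]
        (fun l : ℂ => 1 / ‖l‖)) ∧
    ((fun l : ℂ => EA A l - (((Real.sqrt 2 : ℝ) : ℂ)⁻¹) •
        !![(1 : ℂ), Complex.I; Complex.I, 1])
      =O[Bornology.cobounded ℂ ⊓ Filter.principal {z : ℂ | z.im < 0}]
        (fun l : ℂ => 1 / ‖l‖)) := by
  constructor
  · rw [Asymptotics.isBigO_iff]
    refine ⟨10/A, ?_⟩
    filter_upwards [(eventually_cobounded_le_norm (4/A)).filter_mono inf_le_left,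
      (Filter.eventually_principal.mpr (fun x hx => hx)).filter_mono inf_le_right]
      with l hl hmem
    have h4 : A * (4/A) = 4 := by field_simp
    have ht : 4 ≤ A * ‖l‖ := by
      have := mul_le_mul_of_nonneg_left hl hA.le
      linarith
    have hy : 0 < (1:ℝ) * l.im := by
      have : 0 < l.im := hmem
      linarith
    have hε := hp_est A hA 1 (by norm_num) l hy
    have hcore := core_est A hA 1 (by norm_num) l ht hε
    have hmat : !![-(((1:ℝ)):ℂ), Complex.I; Complex.I, -(((1:ℝ)):ℂ)]
        = !![(-1 : ℂ), Complex.I; Complex.I, -1] := by norm_num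
    rw [hmat] at hcore
    have habsl : 0 < ‖l‖ := by nlinarith [norm_nonneg l]
    calc ‖EA A l - (((Real.sqrt 2 : ℝ) : ℂ)⁻¹) • !![(-1 : ℂ), Complex.I; Complex.I, -1]‖
        ≤ (10/A) * (1 / ‖l‖) := hcore
      _ = 10/A * ‖1 / ‖l‖‖ := by
          rw [Real.norm_eq_abs, _root_.abs_of_nonneg (by positivity : (0:ℝ) ≤ 1 / ‖l‖)]
  · rw [Asymptotics.isBigO_iff]
    refine ⟨10/A, ?_⟩
    filter_upwards [(eventually_cobounded_le_norm (4/A)).filter_mono inf_le_left,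
      (Filter.eventually_principal.mpr (fun x hx => hx)).filter_mono inf_le_right]
      with l hl hmem
    have h4 : A * (4/A) = 4 := by field_simp
    have ht : 4 ≤ A * ‖l‖ := by
      have := mul_le_mul_of_nonneg_left hl hA.le
      linarith
    have hy : 0 < (-1:ℝ) * l.im := by
      have : l.im < 0 := hmem
      nlinarith
    have hε := hp_est A hA (-1) (by norm_num) l hy
    have hcore := core_est A hA (-1) (by norm_num) l ht hε
    have hmat : !![-((((-1):ℝ)):ℂ), Complex.I; Complex.I, -((((-1):ℝ)):ℂ)]
        = !![(1 : ℂ), Complex.I; Complex.I, 1] := by norm_num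
    rw [hmat] at hcore
    have habsl : 0 < ‖l‖ := by nlinarith [norm_nonneg l]
    calc ‖EA A l - (((Real.sqrt 2 : ℝ) : ℂ)⁻¹) • !![(1 : ℂ), Complex.I; Complex.I, 1]‖
        ≤ (10/A) * (1 / ‖l‖) := hcore
      _ = 10/A * ‖1 / ‖l‖‖ := by
          rw [Real.norm_eq_abs, _root_.abs_of_nonneg (by positivity : (0:ℝ) ≤ 1 / ‖l‖)]
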